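/- If a block tri-diagonal nonnegative matrix Q = tridiag(A_{-1}, A_0, A_1) (with identical blocks on all rows, including the boundary row) is irreducible, then both A_{-1} and A_1 are nonzero matrices and the sum A_* = A_{-1} + A_0 + A_1 is irreducible. -/

import Mathlib

open scoped ENNReal
open Classical

/-- `n`-th power of a nonnegative matrix indexed by an arbitrary type, with
products defined via sums in `[0,∞]`. -/

noncomputable def matPow {ι : Type*} (A : ι → ι → ℝ≥0∞) : ℕ → ι → ι → ℝ≥0∞
  | 0 => fun i j => if i = j then 1 else 0
  | n + 1 => fun i j => ∑' k, A i k * matPow A n k j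

/-- Irreducibility: for every pair of indices some power has a positive entry. -/
def IsIrred {ι : Type*} (A : ι → ι → ℝ≥0∞) : Prop :=
  ∀ a b, ∃ n, 1 ≤ n ∧ 0 < matPow A n a b

private lemma matPow_zero' {ι : Type*} (A : ι → ι → ℝ≥0∞) (i j : ι) :
    matPow A 0 i j = if i = j then 1 else 0 := rfl

private lemma matPow_succ' {ι : Type*} (A : ι → ι → ℝ≥0∞) (n : ℕ) (i j : ι) :
    matPow A (n + 1) i j = ∑' k, A i k * matPow A n k j := rfl

/-- If the one-sided block tri-diagonal matrix `Q = tridiag(A₋₁, A₀, A₁)` (with the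
same blocks on every block row, including the boundary row) is irreducible, then
`A₋₁ ≠ 0`, `A₁ ≠ 0` and `A₋₁ + A₀ + A₁` is irreducible. -/
theorem stmt0 (Am1 A0 A1 : ℕ → ℕ → ℝ≥0∞)
    (Q : ℕ × ℕ → ℕ × ℕ → ℝ≥0∞)
    (hQ : ∀ i k j l, Q (i, k) (j, l) =
      if j = i + 1 then A1 k l else if j = i then A0 k l
      else if j + 1 = i then Am1 k l else 0)
    (hirr : IsIrred Q) :
    Am1 ≠ 0 ∧ A1 ≠ 0 ∧ IsIrred (fun i j => Am1 i j + A0 i j + A1 i j) := by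
  set S : ℕ → ℕ → ℝ≥0∞ := fun i j => Am1 i j + A0 i j + A1 i j with hS
  -- every entry of Q is bounded by the corresponding entry of S
  have hQle : ∀ i k j l, Q (i, k) (j, l) ≤ S k l := by
    intro i k j l
    rw [hQ]
    split_ifs
    · exact le_add_self
    · exact le_add_self.trans le_self_add
    · exact le_self_add.trans le_self_add
    · exact zero_le
  -- no upward move possible when A1 = 0
  have hup : A1 = 0 → ∀ n i k j l, i < j → matPow Q n (i, k) (j, l) = 0 := by
    intro hA1 n
    induction n with
    | zero =>
      intro i k j l hij
      rw [matPow_zero', if_neg]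
      intro h
      exact absurd (congrArg Prod.fst h) (Nat.ne_of_lt hij)
    | succ n ih =>
      intro i k j l hij
      rw [matPow_succ', ENNReal.tsum_eq_zero]
      rintro ⟨m, p⟩
      rcases le_or_gt m i with hm | hm
      · rw [ih m p j l (lt_of_le_of_lt hm hij), mul_zero]
      · have : Q (i, k) (m, p) = 0 := by
          rw [hQ]
          split_ifs with h1 h2 h3
          · simp [hA1]
          · omega
          · omega
          · rfl
        rw [this, zero_mul]
  -- no downward move possible when Am1 = 0
  have hdn : Am1 = 0 → ∀ n i k j l, j < i → matPow Q n (i, k) (j, l) = 0 := by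
    intro hAm1 n
    induction n with
    | zero =>
      intro i k j l hij
      rw [matPow_zero', if_neg]
      intro h
      exact absurd (congrArg Prod.fst h) (Nat.ne_of_gt hij)
    | succ n ih =>
      intro i k j l hij
      rw [matPow_succ', ENNReal.tsum_eq_zero]
      rintro ⟨m, p⟩
      rcases lt_or_ge j m with hm | hm
      · rw [ih m p j l hm, mul_zero]
      · have hmi : m < i := lt_of_le_of_lt hm hij
        have : Q (i, k) (m, p) = 0 := by
          rw [hQ]
          split_ifs with h1 h2 h3
          · omega
          · omega
          · simp [hAm1]
          · rfl
        rw [this, zero_mul]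
  -- a positive entry in a power of Q gives a positive entry in the same power of S
  have hdom : ∀ n i k j l, matPow Q n (i, k) (j, l) ≠ 0 → matPow S n k l ≠ 0 := by
    intro n
    induction n with
    | zero =>
      intro i k j l h
      rw [matPow_zero'] at h ⊢
      split_ifs at h with h1
      · rw [if_pos (congrArg Prod.snd h1)]; exact one_ne_zero
      · exact absurd rfl h
    | succ n ih =>
      intro i k j l h
      rw [matPow_succ'] at h
      simp only [ne_eq, ENNReal.tsum_eq_zero, not_forall] at h
      obtain ⟨⟨m, p⟩, hmp⟩ := h
      have hq1 : Q (i, k) (m, p) ≠ 0 := fun hz => hmp (by rw [hz, zero_mul])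
      have hq2 : matPow Q n (m, p) (j, l) ≠ 0 := fun hz => hmp (by rw [hz, mul_zero])
      have h1 : S k p ≠ 0 := fun hz => hq1 (le_antisymm (hz ▸ hQle i k m p) zero_le)
      have h2 : matPow S n p l ≠ 0 := ih m p j l hq2
      rw [matPow_succ']
      simp only [ne_eq, ENNReal.tsum_eq_zero, not_forall]
      exact ⟨p, mul_ne_zero h1 h2⟩
  refine ⟨?_, ?_, ?_⟩
  · intro hAm1
    obtain ⟨n, -, hpos⟩ := hirr (1, 0) (0, 0)
    rw [hdn hAm1 n 1 0 0 0 Nat.zero_lt_one] at hpos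
    exact lt_irrefl 0 hpos
  · intro hA1
    obtain ⟨n, -, hpos⟩ := hirr (0, 0) (1, 0)
    rw [hup hA1 n 0 0 1 0 Nat.zero_lt_one] at hpos
    exact lt_irrefl 0 hpos
  · intro a b
    obtain ⟨n, hn, hpos⟩ := hirr (0, a) (0, b)
    exact ⟨n, hn, pos_iff_ne_zero.mpr (hdom n 0 a 0 b hpos.ne')⟩
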